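/- Let A be an extremal set in a real Hilbert space H with r_H(A) = 1 and Chebyshev center c. Then for every ε ∈ (0,1), the set A_ε := A \ B(c, 1 − ε) is also an extremal set with r_H(A_ε) = 1 and d(A_ε) = √2. -/

import Mathlib

noncomputable def chebRadius {H : Type*} [NormedAddCommGroup H] (A : Set H) : ℝ :=
  ⨅ y : H, ⨆ x : A, ‖(x : H) - y‖

section aux

variable {H : Type*} [NormedAddCommGroup H]

lemma aux_bdd {S : Set H} (hS : Bornology.IsBounded S) (y : H) :
    BddAbove (Set.range fun x : S => ‖(x : H) - y‖) := by
  obtain ⟨C, hC⟩ := isBounded_iff_forall_norm_le.mp hS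
  refine ⟨C + ‖y‖, ?_⟩
  rintro _ ⟨x, rfl⟩
  calc ‖(x : H) - y‖ ≤ ‖(x : H)‖ + ‖y‖ := norm_sub_le _ _
    _ ≤ C + ‖y‖ := by have := hC x x.2; linarith

lemma aux_bddBelow (S : Set H) :
    BddBelow (Set.range fun y : H => ⨆ x : S, ‖(x : H) - y‖) := by
  refine ⟨0, ?_⟩
  rintro _ ⟨y, rfl⟩
  exact Real.iSup_nonneg fun x => norm_nonneg _

lemma chebRadius_le (S : Set H) (y : H) : chebRadius S ≤ ⨆ x : S, ‖(x : H) - y‖ :=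
  ciInf_le (aux_bddBelow S) y

end aux

set_option maxHeartbeats 1000000 in
theorem stmt19 {H : Type*} [NormedAddCommGroup H] [InnerProductSpace ℝ H] [CompleteSpace H] (A : Set H)
    (hb : Bornology.IsBounded A) (hnt : A.Nontrivial)
    (hr : chebRadius A = 1) (hd : Metric.diam A = Real.sqrt 2)
    (c : H) (hc : (⨆ x : A, ‖(x : H) - c‖) = chebRadius A)
    (ε : ℝ) (hε : ε ∈ Set.Ioo (0 : ℝ) 1) :
    chebRadius (A \ Metric.closedBall c (1 - ε)) = 1 ∧
      Metric.diam (A \ Metric.closedBall c (1 - ε)) = Real.sqrt 2 := by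
  obtain ⟨hε0, hε1⟩ := hε
  set Aε := A \ Metric.closedBall c (1 - ε) with hAεdef
  have hAne : A.Nonempty := hnt.nonempty
  haveI : Nonempty ↥A := hAne.to_subtype
  have hbε : Bornology.IsBounded Aε := hb.subset Set.diff_subset
  have hsupA : (⨆ x : A, ‖(x : H) - c‖) = 1 := by rw [hc, hr]
  -- every point of A is within 1 of c
  have hA1 : ∀ x ∈ A, ‖x - c‖ ≤ 1 := by
    intro x hx
    have := le_ciSup (aux_bdd hb c) (⟨x, hx⟩ : A)
    simpa [hsupA] using this
  -- membership in Aε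
  have hmem : ∀ x : H, x ∈ Aε ↔ x ∈ A ∧ 1 - ε < ‖x - c‖ := by
    intro x
    simp only [hAεdef, Set.mem_diff, Metric.mem_closedBall, dist_eq_norm, not_le]
  -- Aε is nonempty
  have hεne : Aε.Nonempty := by
    have hlt : (1 : ℝ) - ε < ⨆ x : A, ‖(x : H) - c‖ := by rw [hsupA]; linarith
    obtain ⟨⟨x, hxA⟩, hx⟩ := exists_lt_of_lt_ciSup hlt
    exact ⟨x, (hmem x).mpr ⟨hxA, hx⟩⟩
  haveI : Nonempty ↥Aε := hεne.to_subtype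
  -- Key lemma: for every y, the sup of distances over Aε is at least 1
  have key : ∀ y : H, (1 : ℝ) ≤ ⨆ x : Aε, ‖(x : H) - y‖ := by
    intro y
    by_contra hlt
    push_neg at hlt
    set s := ⨆ x : Aε, ‖(x : H) - y‖ with hs
    have hs0 : 0 ≤ s := Real.iSup_nonneg fun x => norm_nonneg _
    obtain ⟨C, hC⟩ := isBounded_iff_forall_norm_le.mp hb
    set M := C + ‖y‖ with hM
    have hMy : ∀ x ∈ A, ‖x - y‖ ≤ M := by
      intro x hx
      calc ‖x - y‖ ≤ ‖x‖ + ‖y‖ := norm_sub_le _ _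
        _ ≤ C + ‖y‖ := by have := hC x hx; linarith
    have hM0 : 0 ≤ M := le_trans (norm_nonneg _) (hMy _ hAne.choose_spec)
    set t := ε / (M + 1) with ht
    have ht0 : 0 < t := div_pos hε0 (by linarith)
    have ht1 : t < 1 := by
      rw [ht, div_lt_one (by linarith)]; linarith
    set q := max ((1 - t) * (1 - ε) + t * M) ((1 - t) + t * s) with hq
    have hq1 : q < 1 := by
      refine max_lt ?_ ?_
      · have : t * (M + 1) = ε := by rw [ht]; exact div_mul_cancel₀ _ (by linarith)
        nlinarith
      · nlinarith
    set yt := c + t • (y - c) with hyt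
    have hbound : ∀ x : H, x ∈ A → ‖x - yt‖ ≤ q := by
      intro x hx
      have hdecomp : x - yt = (1 - t) • (x - c) + t • (x - y) := by
        rw [hyt]; module
      have htri : ‖x - yt‖ ≤ (1 - t) * ‖x - c‖ + t * ‖x - y‖ := by
        rw [hdecomp]
        calc ‖(1 - t) • (x - c) + t • (x - y)‖
            ≤ ‖(1 - t) • (x - c)‖ + ‖t • (x - y)‖ := norm_add_le _ _
          _ = (1 - t) * ‖x - c‖ + t * ‖x - y‖ := by
              rw [norm_smul, norm_smul, Real.norm_eq_abs, Real.norm_eq_abs,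
                abs_of_pos ht0, abs_of_pos (by linarith : (0:ℝ) < 1 - t)]
      by_cases hxε : x ∈ Aε
      · have h1 : ‖x - c‖ ≤ 1 := hA1 x hx
        have h2 : ‖x - y‖ ≤ s := le_ciSup (aux_bdd hbε y) (⟨x, hxε⟩ : Aε)
        refine le_trans ?_ (le_max_right _ _)
        nlinarith
      · have h1 : ‖x - c‖ ≤ 1 - ε := by
          by_contra hcon
          push_neg at hcon
          exact hxε ((hmem x).mpr ⟨hx, hcon⟩)
        have h2 : ‖x - y‖ ≤ M := hMy x hx
        refine le_trans ?_ (le_max_left _ _)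
        nlinarith
    have : chebRadius A ≤ q := by
      refine le_trans (chebRadius_le A yt) (ciSup_le ?_)
      exact fun x => hbound x x.2
    rw [hr] at this
    linarith
  -- chebRadius Aε = 1
  have hcheb : chebRadius Aε = 1 := by
    refine le_antisymm ?_ (le_ciInf key)
    refine le_trans (chebRadius_le Aε c) (ciSup_le ?_)
    exact fun x => hA1 x ((hmem x).mp x.2).1
  refine ⟨hcheb, ?_⟩
  -- diameter
  set D := Metric.diam Aε with hD
  have hD0 : 0 ≤ D := Metric.diam_nonneg
  have hupper : D ≤ Real.sqrt 2 := hd ▸ Metric.diam_mono Set.diff_subset hb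
  -- for all small δ, 2 - 9 √δ ≤ D ^ 2
  have hstep : ∀ δ : ℝ, 0 < δ → δ ≤ 1 / 100 → 2 - 9 * Real.sqrt δ ≤ D ^ 2 := by
    intro δ hδ0 hδ100
    set t := Real.sqrt δ with htdef
    have ht0 : 0 < t := Real.sqrt_pos.mpr hδ0
    have ht2 : t ^ 2 = δ := Real.sq_sqrt hδ0.le
    have ht10 : t ≤ 1 / 10 := by
      have : Real.sqrt δ ≤ Real.sqrt (1 / 100) := Real.sqrt_le_sqrt hδ100
      rwa [show (1 : ℝ) / 100 = (1 / 10 : ℝ) ^ 2 by norm_num,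
        Real.sqrt_sq (by norm_num : (0:ℝ) ≤ 1/10)] at this
    have hδt : δ ≤ t := by nlinarith
    -- pick x ∈ Aε with ‖x - c‖ > 1 - δ
    have hsupε : (1 : ℝ) - δ < ⨆ x : Aε, ‖(x : H) - c‖ := by
      have := key c; linarith
    obtain ⟨⟨x, hxε⟩, hx⟩ := exists_lt_of_lt_ciSup hsupε
    simp only at hx
    have hxA : x ∈ A := ((hmem x).mp hxε).1
    have hnx1 : ‖x - c‖ ≤ 1 := hA1 x hxA
    have hnx0 : 0 < ‖x - c‖ := by nlinarith
    set u := ‖x - c‖⁻¹ • (x - c) with hu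
    have hxu : x - c = ‖x - c‖ • u := by
      rw [hu, smul_smul, mul_inv_cancel₀ hnx0.ne', one_smul]
    have hnu : ‖u‖ = 1 := by
      rw [hu, norm_smul, Real.norm_eq_abs, abs_of_pos (inv_pos.mpr hnx0),
        inv_mul_cancel₀ hnx0.ne']
    -- pick y ∈ Aε with ‖y - (c + t • u)‖ > 1 - δ
    have hsup2 : (1 : ℝ) - δ < ⨆ z : Aε, ‖(z : H) - (c + t • u)‖ := by
      have := key (c + t • u); linarith
    obtain ⟨⟨y, hyε⟩, hy⟩ := exists_lt_of_lt_ciSup hsup2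
    simp only at hy
    have hyA : y ∈ A := ((hmem y).mp hyε).1
    have hny1 : ‖y - c‖ ≤ 1 := hA1 y hyA
    -- lower bound on ‖y - c‖
    have hny_lb : 1 - δ - t ≤ ‖y - c‖ := by
      have h1 : ‖y - (c + t • u)‖ ≤ ‖y - c‖ + ‖t • u‖ := by
        have : y - (c + t • u) = (y - c) - t • u := by abel
        rw [this]; exact norm_sub_le _ _
      have h2 : ‖t • u‖ = t := by
        rw [norm_smul, Real.norm_eq_abs, abs_of_pos ht0, hnu, mul_one]
      linarith
    -- inner product bound
    have hexp : ‖(y - c) - t • u‖ ^ 2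
        = ‖y - c‖ ^ 2 - 2 * (t * (inner ℝ (y - c) u : ℝ)) + t ^ 2 := by
      rw [norm_sub_sq_real, real_inner_smul_right]
      have h2 : ‖t • u‖ ^ 2 = t ^ 2 := by
        rw [norm_smul, Real.norm_eq_abs, abs_of_pos ht0, hnu, mul_one]
      rw [h2]
    have hyc : (1 - δ) ^ 2 < ‖(y - c) - t • u‖ ^ 2 := by
      have heq : y - (c + t • u) = (y - c) - t • u := by abel
      rw [heq] at hy
      have : 0 ≤ (1 : ℝ) - δ := by linarith
      nlinarith
    set p : ℝ := inner ℝ (y - c) u with hpdef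
    have hp : p ≤ (3 / 2 : ℝ) * t := by
      rw [hexp] at hyc
      have hny2 : ‖y - c‖ ^ 2 ≤ 1 := by nlinarith [norm_nonneg (y - c)]
      nlinarith
    -- bound on inner (x-c) (y-c)
    have hip : (inner ℝ (x - c) (y - c) : ℝ) ≤ (3 / 2 : ℝ) * t := by
      have heq : (inner ℝ (x - c) (y - c) : ℝ) = ‖x - c‖ * p := by
        rw [hpdef]
        conv_lhs => rw [hxu]
        rw [real_inner_smul_left, real_inner_comm]
      rw [heq]
      rcases le_or_gt p 0 with h | h
      · nlinarith
      · nlinarith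
    -- distance between x and y
    have hxy : 2 - 9 * t ≤ ‖x - y‖ ^ 2 := by
      set ip : ℝ := inner ℝ (x - c) (y - c) with hipdef
      have hexp2 : ‖x - y‖ ^ 2
          = ‖x - c‖ ^ 2 - 2 * ip + ‖y - c‖ ^ 2 := by
        have h : x - y = (x - c) - (y - c) := by abel
        rw [h, norm_sub_sq_real, hipdef]
      have hlb : 1 - δ - t ≤ ‖y - c‖ := hny_lb
      have h1 : (1 - δ) ^ 2 ≤ ‖x - c‖ ^ 2 := by nlinarith
      have h2 : (1 - δ - t) ^ 2 ≤ ‖y - c‖ ^ 2 := by nlinarith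
      rw [hexp2]
      nlinarith
    have hxyD : ‖x - y‖ ≤ D := by
      have := Metric.dist_le_diam_of_mem hbε hxε hyε
      rwa [dist_eq_norm] at this
    nlinarith [norm_nonneg (x - y)]
  -- conclude 2 ≤ D^2
  have h2D : 2 ≤ D ^ 2 := by
    by_contra hcon
    push_neg at hcon
    set e := 2 - D ^ 2 with he
    have he0 : 0 < e := by linarith
    set δ := min (1 / 100 : ℝ) ((e / 10) ^ 2) with hδdef
    have hδ0 : 0 < δ := lt_min (by norm_num) (by positivity)
    have hδ100 : δ ≤ 1 / 100 := min_le_left _ _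
    have hsq : Real.sqrt δ ≤ e / 10 := by
      have h1 : Real.sqrt δ ≤ Real.sqrt ((e / 10) ^ 2) :=
        Real.sqrt_le_sqrt (min_le_right _ _)
      rwa [Real.sqrt_sq (by positivity)] at h1
    have := hstep δ hδ0 hδ100
    nlinarith
  have hlower : Real.sqrt 2 ≤ D := by
    have : Real.sqrt 2 ≤ Real.sqrt (D ^ 2) := Real.sqrt_le_sqrt h2D
    rwa [Real.sqrt_sq hD0] at this
  linarith
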